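/- For the four-step upper half-plane path counts, the ballot-type nonnegativity holds: C(n,r)*C(n,s) - C(n,r-1)*C(n,s-1) >= 0 whenever r = (n-i-j)/2 and s = (n+i-j)/2 are integers with 0 <= r, s <= n and j >= 0. -/

import Mathlib

/-- Binomial coefficient with an integer lower index, interpreted as `0` when the
lower index is negative. -/
def zchoose (n : ℕ) (m : ℤ) : ℕ :=
  if 0 ≤ m then Nat.choose n m.toNat else 0

lemma ballot_key (n a b : ℕ) (h : a + b + 2 ≤ n) :
    n.choose a * n.choose b ≤ n.choose (a + 1) * n.choose (b + 1) := by
  have h1 : n.choose (a + 1) * (a + 1) = n.choose a * (n - a) :=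
    Nat.choose_succ_right_eq n a
  have h2 : n.choose (b + 1) * (b + 1) = n.choose b * (n - b) :=
    Nat.choose_succ_right_eq n b
  have hab : (a + 1) * (b + 1) ≤ (n - a) * (n - b) := by
    rw [Nat.mul_comm (n - a)]
    exact Nat.mul_le_mul (by omega) (by omega)
  have key : (n.choose a * n.choose b) * ((a + 1) * (b + 1)) ≤
      (n.choose (a + 1) * n.choose (b + 1)) * ((a + 1) * (b + 1)) := by
    calc (n.choose a * n.choose b) * ((a + 1) * (b + 1))
        ≤ (n.choose a * n.choose b) * ((n - a) * (n - b)) :=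
          Nat.mul_le_mul_left _ hab
      _ = (n.choose a * (n - a)) * (n.choose b * (n - b)) := by ring
      _ = (n.choose (a + 1) * (a + 1)) * (n.choose (b + 1) * (b + 1)) := by rw [h1, h2]
      _ = (n.choose (a + 1) * n.choose (b + 1)) * ((a + 1) * (b + 1)) := by ring
  exact Nat.le_of_mul_le_mul_right key (by positivity)

/-- Ballot-type nonnegativity: `C(n,r)C(n,s) - C(n,r-1)C(n,s-1) ≥ 0` whenever
`r = (n-i-j)/2` and `s = (n+i-j)/2` are integers with `0 ≤ r, s ≤ n` and `j ≥ 0`. -/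
theorem ballot_nonneg (n : ℕ) (i j r s : ℤ)
    (hr : 2 * r = (n : ℤ) - i - j) (hs : 2 * s = (n : ℤ) + i - j)
    (hr0 : 0 ≤ r) (hrn : r ≤ n) (hs0 : 0 ≤ s) (hsn : s ≤ n) (hj : 0 ≤ j) :
    0 ≤ (zchoose n r : ℤ) * zchoose n s - (zchoose n (r - 1) : ℤ) * zchoose n (s - 1) := by
  have hrs : r + s ≤ (n : ℤ) := by omega
  by_cases hr1 : r = 0
  · have : zchoose n (r - 1) = 0 := by simp [zchoose, hr1]
    rw [this]
    push_cast
    nlinarith [Nat.cast_nonneg (α := ℤ) (zchoose n r), Nat.cast_nonneg (α := ℤ) (zchoose n s)]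
  by_cases hs1 : s = 0
  · have : zchoose n (s - 1) = 0 := by simp [zchoose, hs1]
    rw [this]
    push_cast
    nlinarith [Nat.cast_nonneg (α := ℤ) (zchoose n r), Nat.cast_nonneg (α := ℤ) (zchoose n s)]
  · set a := (r - 1).toNat with ha
    set b := (s - 1).toNat with hb
    have har : r = (a : ℤ) + 1 := by omega
    have hbs : s = (b : ℤ) + 1 := by omega
    have hab : a + b + 2 ≤ n := by omega
    have e1 : zchoose n r = n.choose (a + 1) := by
      simp only [zchoose, if_pos hr0]
      congr 1
      omega
    have e2 : zchoose n s = n.choose (b + 1) := by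
      simp only [zchoose, if_pos hs0]
      congr 1
      omega
    have e3 : zchoose n (r - 1) = n.choose a := by
      simp only [zchoose, if_pos (by omega : (0:ℤ) ≤ r - 1)]
      rfl
    have e4 : zchoose n (s - 1) = n.choose b := by
      simp only [zchoose, if_pos (by omega : (0:ℤ) ≤ s - 1)]
      rfl
    rw [e1, e2, e3, e4]
    have := ballot_key n a b hab
    exact sub_nonneg.mpr (by exact_mod_cast this)
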